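/- Let t > 0 be real, set z := t·√(1 + t/2), m² := 1/(2z), and u₁ := −m²·(2t + (3/4)t²). Define g₂(u) := (4/3)u² − 1 and g₃(u) := z/8 − u/3 + (8/27)u³. Then g₂(u₁) = t²(1 + 3t/4)²/(3z²) and g₃(u₁) = t³(1 + 3t/4)³/(27z³). In particular g₂(u₁)³ = 27·g₃(u₁)² (so the discriminant g₂³ − 27g₃² vanishes at u₁), and g₂(u₁)/(36·g₃(u₁)) = z/(4t(1 + 3t/4)). -/

import Mathlib

/-- equal-mass `N_f = 1` Seiberg–Witten data in units `Λ₀ = 1`.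
For `t > 0`, with `z = t√(1 + t/2)`, `m² = 1/(2z)`,
`u₁ = −m²(2t + (3/4)t²)`, `g₂(u) = (4/3)u² − 1`,
`g₃(u) = z/8 − u/3 + (8/27)u³`, one has
`g₂(u₁) = t²(1+3t/4)²/(3z²)`, `g₃(u₁) = t³(1+3t/4)³/(27z³)`,
hence `g₂(u₁)³ = 27 g₃(u₁)²` and `g₂(u₁)/(36 g₃(u₁)) = z/(4t(1+3t/4))`. -/
theorem stmt_2 (t z m2 u1 : ℝ) (ht : 0 < t)
    (hz : z = t * Real.sqrt (1 + t/2))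
    (hm2 : m2 = 1/(2*z))
    (hu1 : u1 = -m2 * (2*t + (3/4)*t^2))
    (g2 g3 : ℝ → ℝ)
    (hg2 : ∀ u, g2 u = (4/3)*u^2 - 1)
    (hg3 : ∀ u, g3 u = z/8 - u/3 + (8/27)*u^3) :
    g2 u1 = t^2*(1 + 3*t/4)^2/(3*z^2) ∧
    g3 u1 = t^3*(1 + 3*t/4)^3/(27*z^3) ∧
    g2 u1 ^ 3 = 27 * g3 u1 ^ 2 ∧
    g2 u1 / (36 * g3 u1) = z/(4*t*(1 + 3*t/4)) := by
  have hspos : 0 < Real.sqrt (1 + t/2) := Real.sqrt_pos.2 (by linarith)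
  have hzpos : 0 < z := by rw [hz]; positivity
  have hz0 : z ≠ 0 := ne_of_gt hzpos
  have ht0 : t ≠ 0 := ne_of_gt ht
  have hzsq : z^2 = t^2*(1 + t/2) := by
    rw [hz, mul_pow, Real.sq_sqrt (by linarith)]
  have h2 : g2 u1 = t^2*(1 + 3*t/4)^2/(3*z^2) := by
    rw [hg2, hu1, hm2]; field_simp; linear_combination ((-192)*t^0*z^0) * hzsq
  have h3 : g3 u1 = t^3*(1 + 3*t/4)^3/(27*z^3) := by
    rw [hg3, hu1, hm2]; field_simp; ring_nf
    linear_combination ((110592)*t^1*z^0 + (82944)*t^2*z^0 + (20736)*t^3*z^0 + (41472)*t^0*z^2) * hzsq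
  have hpos3 : 0 < g3 u1 := by rw [h3]; positivity
  refine ⟨h2, h3, ?_, ?_⟩
  · rw [h2, h3]; field_simp; ring
  · rw [h2, h3]; rw [div_eq_div_iff (by positivity) (by positivity)]
    field_simp; ring
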